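/- Let K be a field, I ⊴ K[x₁,…,xₙ] an ideal, and w, v ∈ ℚⁿ weight vectors such that neither in_w(I) nor in_v(I) contains a monomial. Suppose there exists a trinomial P = s₀ + s₁ + s₂ ∈ I (a polynomial with exactly three nonzero terms s₀, s₁, s₂ on pairwise distinct exponent vectors) such that in_w(P) ≠ in_v(P). Then the saturated initial ideals differ: in_w(I) : p^∞ ≠ in_v(I) : p^∞, where the saturation is taken at the product p = x₁⋯xₙ of all variables. -/

import Mathlib

open MvPolynomial


/-- The saturation `J : p^∞` of an ideal `J` at the product `p = x₁⋯xₙ` of all variables: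
the ideal of all `f` such that `(x₁⋯xₙ)^k · f ∈ J` for some `k ∈ ℕ`. -/
def satIdeal {n : ℕ} {K : Type*} [CommRing K] (J : Ideal (MvPolynomial (Fin n) K)) :
    Ideal (MvPolynomial (Fin n) K) where
  carrier := {f | ∃ k : ℕ, (∏ i, X i) ^ k * f ∈ J}
  zero_mem' := ⟨0, by simp⟩
  add_mem' := by
    rintro a b ⟨k, hk⟩ ⟨l, hl⟩
    refine ⟨k + l, ?_⟩
    rw [mul_add, pow_add]
    refine J.add_mem ?_ ?_
    · rw [mul_comm ((∏ i, X i) ^ k) ((∏ i, X i) ^ l), mul_assoc]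
      exact J.mul_mem_left _ hk
    · rw [mul_assoc]
      exact J.mul_mem_left _ hl
  smul_mem' := by
    rintro c f ⟨k, hk⟩
    refine ⟨k, ?_⟩
    rw [smul_eq_mul, mul_left_comm]
    exact J.mul_mem_left _ hk

/-- The `w`-weighted degree of an exponent vector `α`: `w·α = Σᵢ wᵢ αᵢ`. -/
def wdeg {n : ℕ} (w : Fin n → ℚ) (α : Fin n →₀ ℕ) : ℚ := ∑ i, w i * (α i : ℚ)

/-- The initial form `in_w(f)`: the sum of the terms `c_α x^α` of `f` for which `w·α`
is maximal over the support of `f` (with `in_w(0) = 0`). -/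
noncomputable def initialForm {n : ℕ} {K : Type*} [Field K] (w : Fin n → ℚ)
    (f : MvPolynomial (Fin n) K) : MvPolynomial (Fin n) K :=
  ∑ α ∈ f.support.filter (fun α => ∀ β ∈ f.support, wdeg w β ≤ wdeg w α),
    monomial α (coeff α f)

/-- The initial ideal `in_w(I) = ⟨in_w(f) : f ∈ I⟩`. -/
noncomputable def initialIdeal {n : ℕ} {K : Type*} [Field K] (w : Fin n → ℚ)
    (I : Ideal (MvPolynomial (Fin n) K)) : Ideal (MvPolynomial (Fin n) K) :=
  Ideal.span (initialForm w '' (I : Set (MvPolynomial (Fin n) K)))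

/- ### Auxiliary development -/

section Aux

variable {n : ℕ} {K : Type*} [Field K]

lemma wdeg_add (v : Fin n → ℚ) (α β : Fin n →₀ ℕ) :
    wdeg v (α + β) = wdeg v α + wdeg v β := by
  simp [wdeg, Finset.sum_add_distrib, mul_add]

open Classical in
lemma coeff_filter_sum (f : MvPolynomial (Fin n) K) (p : (Fin n →₀ ℕ) → Prop)
    [DecidablePred p] (γ : Fin n →₀ ℕ) :
    coeff γ (∑ α ∈ f.support.filter p, monomial α (coeff α f)) =
      if p γ then coeff γ f else 0 := by
  classical
  rw [MvPolynomial.coeff_sum]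
  simp only [coeff_monomial]
  rw [Finset.sum_ite_eq' (f.support.filter p) γ (fun α => coeff α f)]
  by_cases hs : γ ∈ f.support
  · simp [Finset.mem_filter, hs]
  · have : coeff γ f = 0 := by simpa [MvPolynomial.mem_support_iff, not_not] using hs
    simp [Finset.mem_filter, hs, this]

/-- The `v`-homogeneous vslice of degree `d` of a polynomial. -/
noncomputable def vslice (v : Fin n → ℚ) (d : ℚ) (f : MvPolynomial (Fin n) K) :
    MvPolynomial (Fin n) K := by
  classical
  exact ∑ α ∈ f.support.filter (fun α => wdeg v α = d), monomial α (coeff α f)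

lemma coeff_vslice (v : Fin n → ℚ) (d : ℚ) (f : MvPolynomial (Fin n) K) (γ : Fin n →₀ ℕ) :
    coeff γ (vslice v d f) = if wdeg v γ = d then coeff γ f else 0 := by
  classical
  rw [vslice]
  exact coeff_filter_sum f (fun α => wdeg v α = d) γ

lemma coeff_initialForm (v : Fin n → ℚ) (f : MvPolynomial (Fin n) K) (γ : Fin n →₀ ℕ) :
    coeff γ (initialForm v f) =
      if (∀ β ∈ f.support, wdeg v β ≤ wdeg v γ) then coeff γ f else 0 := by
  classical
  rw [initialForm]
  exact coeff_filter_sum f _ γ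

lemma vslice_add (v : Fin n → ℚ) (d : ℚ) (f g : MvPolynomial (Fin n) K) :
    vslice v d (f + g) = vslice v d f + vslice v d g := by
  ext γ
  simp only [coeff_add, coeff_vslice]
  split_ifs <;> simp

lemma vslice_zero (v : Fin n → ℚ) (d : ℚ) : vslice v d (0 : MvPolynomial (Fin n) K) = 0 := by
  ext γ
  simp [coeff_vslice]

lemma vslice_sum (v : Fin n → ℚ) (d : ℚ) {ι : Type*} (s : Finset ι)
    (f : ι → MvPolynomial (Fin n) K) :
    vslice v d (∑ i ∈ s, f i) = ∑ i ∈ s, vslice v d (f i) := by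
  classical
  induction s using Finset.induction_on with
  | empty => simp [vslice_zero]
  | insert _ _ h ih => simp [Finset.sum_insert h, vslice_add, ih]

lemma vslice_mul_homog (v : Fin n → ℚ) (d e : ℚ) (g h : MvPolynomial (Fin n) K)
    (he : ∀ γ, coeff γ h ≠ 0 → wdeg v γ = e) :
    vslice v d (g * h) = vslice v (d - e) g * h := by
  classical
  ext γ
  rw [coeff_vslice, MvPolynomial.coeff_mul, MvPolynomial.coeff_mul]
  by_cases hd : wdeg v γ = d
  · rw [if_pos hd]
    refine Finset.sum_congr rfl fun x hx => ?_
    rw [coeff_vslice]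
    by_cases hh : coeff x.2 h = 0
    · simp [hh]
    · have hx2 : wdeg v x.2 = e := he _ hh
      have hx12 : x.1 + x.2 = γ := Finset.HasAntidiagonal.mem_antidiagonal.mp hx
      have : wdeg v x.1 = d - e := by
        have := wdeg_add v x.1 x.2
        rw [hx12, hd, hx2] at this
        linarith
      rw [if_pos this]
  · rw [if_neg hd]
    refine (Finset.sum_eq_zero fun x hx => ?_).symm
    rw [coeff_vslice]
    by_cases hh : coeff x.2 h = 0
    · simp [hh]
    · have hx2 : wdeg v x.2 = e := he _ hh
      have hx12 : x.1 + x.2 = γ := Finset.HasAntidiagonal.mem_antidiagonal.mp hx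
      by_cases h1 : wdeg v x.1 = d - e
      · exfalso
        apply hd
        have := wdeg_add v x.1 x.2
        rw [hx12, hx2, h1] at this
        linarith
      · rw [if_neg h1, zero_mul]

/-- Initial forms are weighted-homogeneous. -/
lemma initialForm_homog (v : Fin n → ℚ) (q : MvPolynomial (Fin n) K) :
    ∃ e : ℚ, ∀ γ, coeff γ (initialForm v q) ≠ 0 → wdeg v γ = e := by
  by_cases h0 : initialForm v q = 0
  · exact ⟨0, fun γ hγ => absurd (by rw [h0]; rfl) hγ⟩
  · obtain ⟨γ₀, hγ₀⟩ := MvPolynomial.ne_zero_iff.mp h0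
    refine ⟨wdeg v γ₀, fun γ hγ => ?_⟩
    rw [coeff_initialForm] at hγ₀ hγ
    by_cases hc : ∀ β ∈ q.support, wdeg v β ≤ wdeg v γ
    · by_cases hc0 : ∀ β ∈ q.support, wdeg v β ≤ wdeg v γ₀
      · rw [if_pos hc] at hγ
        rw [if_pos hc0] at hγ₀
        have hγs : γ ∈ q.support := MvPolynomial.mem_support_iff.mpr hγ
        have hγ0s : γ₀ ∈ q.support := MvPolynomial.mem_support_iff.mpr hγ₀
        exact le_antisymm (hc0 γ hγs) (hc γ₀ hγ0s)
      · rw [if_neg hc0] at hγ₀; exact absurd rfl hγ₀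
    · rw [if_neg hc] at hγ; exact absurd rfl hγ

/-- Key lemma: the initial ideal is closed under taking `v`-homogeneous slices. -/
lemma vslice_mem_initialIdeal (v : Fin n → ℚ) (I : Ideal (MvPolynomial (Fin n) K))
    (f : MvPolynomial (Fin n) K) (hf : f ∈ initialIdeal v I) (d : ℚ) :
    vslice v d f ∈ initialIdeal v I := by
  classical
  rw [initialIdeal, Ideal.span, ← Set.image_id (initialForm v '' _)] at hf
  rw [Set.image_id] at hf
  obtain ⟨c, hcs, hcf⟩ := Submodule.mem_span_set.mp hf
  rw [← hcf, Finsupp.sum, vslice_sum]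
  refine Ideal.sum_mem _ fun h hh => ?_
  have hhs : h ∈ initialForm v '' (I : Set (MvPolynomial (Fin n) K)) := hcs hh
  obtain ⟨q, hqI, hq⟩ := hhs
  obtain ⟨e, he⟩ := initialForm_homog v q
  rw [← hq] at *
  rw [smul_eq_mul, vslice_mul_homog v d e _ _ he]
  exact Ideal.mul_mem_left _ _ (Ideal.subset_span ⟨q, hqI, rfl⟩)

/-- If an ideal contains a nonzero scalar multiple of a monomial, it contains the monomial. -/
lemma monomial_one_mem (J : Ideal (MvPolynomial (Fin n) K)) (α : Fin n →₀ ℕ) (c : K)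
    (hc : c ≠ 0) (h : (monomial α c : MvPolynomial (Fin n) K) ∈ J) :
    (monomial α (1 : K)) ∈ J := by
  have : (monomial α (1 : K)) = C c⁻¹ * monomial α c := by
    rw [C_mul_monomial, inv_mul_cancel₀ hc]
  rw [this]
  exact J.mul_mem_left _ h

lemma prod_X_pow_eq (k : ℕ) :
    ∃ u : Fin n →₀ ℕ, ((∏ i, X i : MvPolynomial (Fin n) K)) ^ k = monomial u 1 := by
  classical
  have h : ∀ s : Finset (Fin n), (∏ i ∈ s, (X i : MvPolynomial (Fin n) K)) =
      monomial (∑ i ∈ s, Finsupp.single i 1) 1 := by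
    intro s
    induction s using Finset.induction_on with
    | empty => simp [monomial_zero']
    | insert _ _ h ih =>
        rw [Finset.prod_insert h, Finset.sum_insert h, ih, X, monomial_mul, one_mul]
  refine ⟨k • ∑ i, Finsupp.single i 1, ?_⟩
  rw [h Finset.univ, monomial_pow, one_pow]

end Aux

section Main

variable {n : ℕ} {K : Type*} [Field K]

lemma mem_satIdeal {J : Ideal (MvPolynomial (Fin n) K)} {f : MvPolynomial (Fin n) K} :
    f ∈ satIdeal J ↔ ∃ k : ℕ, (∏ i, X i) ^ k * f ∈ J := Iff.rfl

lemma vslice_monomial (v : Fin n → ℚ) (d : ℚ) (γ : Fin n →₀ ℕ) (c : K) :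
    vslice v d (monomial γ c) = if wdeg v γ = d then monomial γ c else 0 := by
  ext δ
  rw [coeff_vslice]
  by_cases h : γ = δ
  · subst h
    split_ifs <;> simp_all [coeff_monomial]
  · split_ifs <;> simp [coeff_monomial, h]

/-- Main auxiliary contradiction lemma. -/
lemma aux_contra (I : Ideal (MvPolynomial (Fin n) K)) (w v : Fin n → ℚ)
    (hv : ¬ ∃ α : Fin n →₀ ℕ, (monomial α (1 : K)) ∈ initialIdeal v I)
    (P : MvPolynomial (Fin n) K) (hP : P ∈ I)
    (hsat : satIdeal (initialIdeal w I) = satIdeal (initialIdeal v I))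
    (α : Fin n →₀ ℕ)
    (hαS : α ∈ P.support.filter (fun α => ∀ β ∈ P.support, wdeg w β ≤ wdeg w α))
    (hαT : α ∉ P.support.filter (fun α => ∀ β ∈ P.support, wdeg v β ≤ wdeg v α))
    (hsub : ∀ β ∈ P.support.filter (fun α => ∀ β ∈ P.support, wdeg w β ≤ wdeg w α),
      β ∉ P.support.filter (fun α => ∀ β ∈ P.support, wdeg v β ≤ wdeg v α) → β = α) :
    False := by
  classical
  set S := P.support.filter (fun α => ∀ β ∈ P.support, wdeg w β ≤ wdeg w α) with hSdef
  have hαP : α ∈ P.support := (Finset.mem_filter.mp hαS).1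
  -- `in_w(P)` lies in the saturated `v`-initial ideal
  have h1 : initialForm w P ∈ satIdeal (initialIdeal w I) :=
    mem_satIdeal.mpr ⟨0, by simpa [initialIdeal] using (Ideal.subset_span ⟨P, hP, rfl⟩ :
      initialForm w P ∈ initialIdeal w I)⟩
  rw [hsat] at h1
  obtain ⟨k, hk⟩ := mem_satIdeal.mp h1
  obtain ⟨u, hu⟩ := prod_X_pow_eq (K := K) (n := n) k
  -- the product is an explicit sum of monomials
  have hprod : (∏ i, X i : MvPolynomial (Fin n) K) ^ k * initialForm w P =
      ∑ β ∈ S, monomial (u + β) (coeff β P) := by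
    rw [hu, initialForm, Finset.mul_sum]
    refine Finset.sum_congr rfl fun β _ => ?_
    rw [monomial_mul, one_mul]
  -- strict inequality from α ∉ T
  have hlt : ∀ β ∈ P.support, (∀ γ ∈ P.support, wdeg v γ ≤ wdeg v β) → wdeg v α < wdeg v β := by
    intro β hβ hmax
    rw [Finset.mem_filter, not_and] at hαT
    push_neg at hαT
    obtain ⟨γ, hγ, hγlt⟩ := hαT hαP
    exact lt_of_lt_of_le hγlt (hmax γ hγ)
  -- uniqueness of α among members of S with its v-degree
  have huniq : ∀ β ∈ S, wdeg v β = wdeg v α → β = α := by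
    intro β hβS hβd
    by_cases hβT : β ∈ P.support.filter (fun α => ∀ β ∈ P.support, wdeg v β ≤ wdeg v α)
    · exfalso
      obtain ⟨hβP, hβmax⟩ := Finset.mem_filter.mp hβT
      have := hlt β hβP hβmax
      rw [hβd] at this
      exact lt_irrefl _ this
    · exact hsub β hβS hβT
  -- take the vslice at degree wdeg v (u + α)
  have hslice : vslice v (wdeg v (u + α)) ((∏ i, X i : MvPolynomial (Fin n) K) ^ k *
      initialForm w P) = monomial (u + α) (coeff α P) := by
    rw [hprod, vslice_sum]
    have h0 : ∀ β ∈ S, β ≠ α →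
        vslice v (wdeg v (u + α)) (monomial (u + β) (coeff β P)) = 0 := by
      intro β hβS hβα
      rw [vslice_monomial, if_neg]
      intro h'
      rw [wdeg_add, wdeg_add] at h'
      exact hβα (huniq β hβS (by linarith))
    rw [Finset.sum_eq_single_of_mem α hαS h0, vslice_monomial, if_pos rfl]
  have hmem : (monomial (u + α) (coeff α P) : MvPolynomial (Fin n) K) ∈ initialIdeal v I := by
    rw [← hslice]
    exact vslice_mem_initialIdeal v I _ hk _
  exact hv ⟨u + α, monomial_one_mem _ _ _ (MvPolynomial.mem_support_iff.mp hαP) hmem⟩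

end Main

/-- Let `I ⊴ K[x₁,…,xₙ]` and `w, v ∈ ℚⁿ` be such that neither `in_w(I)` nor `in_v(I)`
contains a monomial.  If there is a trinomial `P ∈ I` with `in_w(P) ≠ in_v(P)`, then the
saturated initial ideals differ: `in_w(I) : p^∞ ≠ in_v(I) : p^∞`. -/
theorem statement10 (n : ℕ) (K : Type*) [Field K] (I : Ideal (MvPolynomial (Fin n) K))
    (w v : Fin n → ℚ)
    (hw : ¬ ∃ α : Fin n →₀ ℕ, (monomial α (1 : K)) ∈ initialIdeal w I)
    (hv : ¬ ∃ α : Fin n →₀ ℕ, (monomial α (1 : K)) ∈ initialIdeal v I)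
    (P : MvPolynomial (Fin n) K) (hP : P ∈ I) (hP3 : P.support.card = 3)
    (hPwv : initialForm w P ≠ initialForm v P) :
    satIdeal (initialIdeal w I) ≠ satIdeal (initialIdeal v I) := by
  classical
  intro hsat
  set S := P.support.filter (fun α => ∀ β ∈ P.support, wdeg w β ≤ wdeg w α) with hSdef
  set T := P.support.filter (fun α => ∀ β ∈ P.support, wdeg v β ≤ wdeg v α) with hTdef
  have hPne : P.support.Nonempty := by
    rw [← Finset.card_pos, hP3]; norm_num
  -- both S and T are nonempty
  have hSne : S.Nonempty := by
    obtain ⟨b, hb, hmax⟩ := P.support.exists_max_image (wdeg w) hPne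
    exact ⟨b, Finset.mem_filter.mpr ⟨hb, hmax⟩⟩
  have hTne : T.Nonempty := by
    obtain ⟨b, hb, hmax⟩ := P.support.exists_max_image (wdeg v) hPne
    exact ⟨b, Finset.mem_filter.mpr ⟨hb, hmax⟩⟩
  have hST : S ≠ T := by
    intro h
    apply hPwv
    rw [initialForm, initialForm, ← hSdef, ← hTdef, h]
  -- each has at least two elements (else a monomial lies in an initial ideal)
  have two_le : ∀ (ω : Fin n → ℚ),
      (¬ ∃ α : Fin n →₀ ℕ, (monomial α (1 : K)) ∈ initialIdeal ω I) →
      2 ≤ (P.support.filter (fun α => ∀ β ∈ P.support, wdeg ω β ≤ wdeg ω α)).card := by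
    intro ω hω
    by_contra hcard
    push_neg at hcard
    set Sω := P.support.filter (fun α => ∀ β ∈ P.support, wdeg ω β ≤ wdeg ω α) with hSω
    have hSωne : Sω.Nonempty := by
      obtain ⟨b, hb, hmax⟩ := P.support.exists_max_image (wdeg ω) hPne
      exact ⟨b, Finset.mem_filter.mpr ⟨hb, hmax⟩⟩
    have hc1 : Sω.card = 1 := le_antisymm (by omega) (Finset.card_pos.mpr hSωne)
    obtain ⟨α, hα⟩ := Finset.card_eq_one.mp hc1
    have hform : initialForm ω P = monomial α (coeff α P) := by
      rw [initialForm, ← hSω, hα, Finset.sum_singleton]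
    have hαP : α ∈ P.support := by
      have : α ∈ Sω := by rw [hα]; exact Finset.mem_singleton_self α
      exact (Finset.mem_filter.mp this).1
    have hmem : initialForm ω P ∈ initialIdeal ω I := Ideal.subset_span ⟨P, hP, rfl⟩
    rw [hform] at hmem
    exact hω ⟨α, monomial_one_mem _ _ _ (MvPolynomial.mem_support_iff.mp hαP) hmem⟩
  have hS2 : 2 ≤ S.card := two_le w hw
  have hT2 : 2 ≤ T.card := two_le v hv
  have hSsub : S ⊆ P.support := Finset.filter_subset _ _
  have hTsub : T ⊆ P.support := Finset.filter_subset _ _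
  -- difference sets have at most one element
  have hdiff : ∀ (A B : Finset (Fin n →₀ ℕ)), A ⊆ P.support → B ⊆ P.support →
      2 ≤ B.card → (A \ B).card ≤ 1 := by
    intro A B hA hB hB2
    calc (A \ B).card ≤ (P.support \ B).card :=
          Finset.card_le_card (Finset.sdiff_subset_sdiff hA (le_refl B))
      _ = P.support.card - B.card := Finset.card_sdiff_of_subset hB
      _ ≤ 1 := by omega
  by_cases hSTne : (S \ T).Nonempty
  · have hc : (S \ T).card = 1 :=
      le_antisymm (hdiff S T hSsub hTsub hT2) (Finset.card_pos.mpr hSTne)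
    obtain ⟨α, hα⟩ := Finset.card_eq_one.mp hc
    have hαmem : α ∈ S \ T := by rw [hα]; exact Finset.mem_singleton_self α
    obtain ⟨hαS, hαT⟩ := Finset.mem_sdiff.mp hαmem
    refine aux_contra I w v hv P hP hsat α hαS hαT ?_
    intro β hβS hβT
    have : β ∈ S \ T := Finset.mem_sdiff.mpr ⟨hβS, hβT⟩
    rw [hα] at this
    exact Finset.mem_singleton.mp this
  · -- S ⊆ T, so T \ S is nonempty; swap roles of w and v
    have hSsubT : S ⊆ T := by
      intro x hx
      by_contra hxT
      exact hSTne ⟨x, Finset.mem_sdiff.mpr ⟨hx, hxT⟩⟩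
    have hTSne : (T \ S).Nonempty := by
      by_contra h
      apply hST
      refine Finset.Subset.antisymm hSsubT fun x hx => ?_
      by_contra hxS
      exact h ⟨x, Finset.mem_sdiff.mpr ⟨hx, hxS⟩⟩
    have hc : (T \ S).card = 1 :=
      le_antisymm (hdiff T S hTsub hSsub hS2) (Finset.card_pos.mpr hTSne)
    obtain ⟨α, hα⟩ := Finset.card_eq_one.mp hc
    have hαmem : α ∈ T \ S := by rw [hα]; exact Finset.mem_singleton_self α
    obtain ⟨hαT, hαS⟩ := Finset.mem_sdiff.mp hαmem
    refine aux_contra I v w hw P hP hsat.symm α hαT hαS ?_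
    intro β hβT hβS
    have : β ∈ T \ S := Finset.mem_sdiff.mpr ⟨hβT, hβS⟩
    rw [hα] at this
    exact Finset.mem_singleton.mp this
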